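/- Let n, k ∈ ℕ₀ with n ≠ k and let L_n(x) := √(2n+1) · P_n(2x − 1), where P_n is the degree-n Legendre polynomial on [−1,1] normalized by P_n(1) = 1. Then for every x ∈ [0,1], ∫_0^x L_n(t) L_k(t) dt = (x − x²) · (L_n(x) L_k′(x) − L_k(x) L_n′(x)) / ((n + k + 1)(n − k)). -/

import Mathlib

open MeasureTheory

noncomputable section

noncomputable def legendreP (n : ℕ) : Polynomial ℝ :=
  Polynomial.C ((1 : ℝ) / ((2 : ℝ) ^ n * (n.factorial : ℝ))) *
    (fun p => Polynomial.derivative p)^[n] ((Polynomial.X ^ 2 - 1) ^ n)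

noncomputable def legL (n : ℕ) (x : ℝ) : ℝ :=
  Real.sqrt (2 * (n : ℝ) + 1) * (legendreP n).eval (2 * x - 1)

open Polynomial

noncomputable def uu (n : ℕ) : ℝ[X] := (X ^ 2 - 1) ^ n

lemma base (n : ℕ) : (X ^ 2 - 1 : ℝ[X]) * derivative (uu n) = C (2 * n : ℝ) * X * uu n := by
  cases n with
  | zero => simp [uu]
  | succ m =>
    unfold uu
    rw [derivative_pow]
    have h2 : derivative (X ^ 2 - 1 : ℝ[X]) = C 2 * X := by
      simp [derivative_X_pow]
      rw [one_add_one_eq_two, map_ofNat]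
    rw [h2]
    simp only [Nat.add_sub_cancel]
    push_cast
    simp only [C_add, C_mul, C_1, map_ofNat]
    ring

lemma iter (n : ℕ) (j : ℕ) : (X ^ 2 - 1 : ℝ[X]) * derivative^[j+2] (uu n)
    = C (2*(n:ℝ) - 2*((j:ℝ)+1)) * X * derivative^[j+1] (uu n)
      + C (((j:ℝ)+1)*(2*(n:ℝ) - (j:ℝ))) * derivative^[j] (uu n) := by
  induction j with
  | zero =>
    have h := congrArg derivative (base n)
    simp only [derivative_add, derivative_sub, derivative_mul, derivative_C, derivative_X,
      derivative_one, derivative_X_pow, derivative_ofNat] at h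
    simp only [Function.iterate_succ_apply', Function.iterate_zero_apply]
    push_cast at h ⊢
    simp only [C_sub, C_add, C_mul, C_1, C_0, map_ofNat] at h ⊢
    linear_combination h
  | succ j ih =>
    have h := congrArg derivative ih
    simp only [C_sub, C_add, C_mul, C_1, C_0, map_ofNat, Function.iterate_succ_apply'] at h
    simp only [derivative_add, derivative_sub, derivative_mul, derivative_C, derivative_X,
      derivative_one, derivative_X_pow, derivative_ofNat] at h
    simp only [Function.iterate_succ_apply']
    push_cast at h ⊢
    simp only [C_sub, C_add, C_mul, C_1, C_0, map_ofNat] at h ⊢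
    linear_combination h

lemma ode (n : ℕ) : (X ^ 2 - 1 : ℝ[X]) * derivative (derivative (legendreP n))
    + C 2 * X * derivative (legendreP n) = C ((n:ℝ) * ((n:ℝ)+1)) * legendreP n := by
  have h := iter n n
  simp only [Function.iterate_succ_apply'] at h
  have e : legendreP n = C ((1:ℝ)/((2:ℝ)^n * n.factorial)) * derivative^[n] (uu n) := rfl
  rw [e, derivative_C_mul, derivative_C_mul]
  simp only [C_sub, C_add, C_mul, C_1, map_ofNat] at h ⊢
  linear_combination C ((1:ℝ)/((2:ℝ)^n * n.factorial)) * h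

noncomputable def Qp (n : ℕ) : ℝ[X] := (legendreP n).comp (C 2 * X - 1)

lemma odeQ (n : ℕ) : derivative ((X - X ^ 2 : ℝ[X]) * derivative (Qp n))
    = C (-((n:ℝ) * ((n:ℝ)+1))) * Qp n := by
  have h := congrArg (fun p => p.comp (C 2 * X - 1 : ℝ[X])) (ode n)
  simp only [add_comp, mul_comp, sub_comp, pow_comp, X_comp, one_comp, C_comp] at h
  have hds : derivative (C 2 * X - 1 : ℝ[X]) = C 2 := by
    simp
  have d1 : derivative (Qp n) = C 2 * (derivative (legendreP n)).comp (C 2 * X - 1) := by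
    unfold Qp; rw [derivative_comp, hds]
  have d2 : derivative (derivative (Qp n))
      = C 4 * (derivative (derivative (legendreP n))).comp (C 2 * X - 1) := by
    rw [d1, derivative_C_mul, derivative_comp, hds]
    simp only [C_add, C_mul, C_1, map_ofNat]
    ring
  simp only [derivative_mul, derivative_sub, derivative_X, derivative_X_pow]
  rw [d2, d1]
  unfold Qp
  push_cast at h ⊢
  simp only [C_sub, C_add, C_mul, C_neg, C_1, C_0, map_ofNat] at h ⊢
  linear_combination -h

lemma dG (n k : ℕ) :
    derivative ((X - X ^ 2 : ℝ[X]) * (Qp n * derivative (Qp k) - Qp k * derivative (Qp n)))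
      = C (((n:ℝ)+(k:ℝ)+1) * ((n:ℝ)-(k:ℝ))) * (Qp n * Qp k) := by
  have hn := odeQ n
  have hk := odeQ k
  have e : (X - X ^ 2 : ℝ[X]) * (Qp n * derivative (Qp k) - Qp k * derivative (Qp n))
      = Qp n * ((X - X ^ 2) * derivative (Qp k)) - Qp k * ((X - X ^ 2) * derivative (Qp n)) := by
    ring
  have h1 : derivative (Qp n * ((X - X ^ 2 : ℝ[X]) * derivative (Qp k)))
      = derivative (Qp n) * ((X - X ^ 2) * derivative (Qp k))
        + Qp n * (C (-((k:ℝ) * ((k:ℝ)+1))) * Qp k) := by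
    rw [derivative_mul, hk]
  have h2 : derivative (Qp k * ((X - X ^ 2 : ℝ[X]) * derivative (Qp n)))
      = derivative (Qp k) * ((X - X ^ 2) * derivative (Qp n))
        + Qp k * (C (-((n:ℝ) * ((n:ℝ)+1))) * Qp n) := by
    rw [derivative_mul, hn]
  rw [e, derivative_sub, h1, h2]
  simp only [C_sub, C_add, C_mul, C_neg, C_1, C_0, map_ofNat]
  ring

lemma integ (p : ℝ[X]) (y : ℝ) :
    ∫ t in (0:ℝ)..y, (derivative p).eval t = p.eval y - p.eval 0 :=
  intervalIntegral.integral_eq_sub_of_hasDerivAt (fun t _ => p.hasDerivAt t)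
    ((Polynomial.continuous _).intervalIntegrable _ _)

lemma legL_eq (m : ℕ) (t : ℝ) : legL m t = Real.sqrt (2 * (m:ℝ) + 1) * (Qp m).eval t := by
  unfold legL Qp
  rw [eval_comp]
  norm_num

lemma deriv_legL (m : ℕ) (t : ℝ) :
    deriv (legL m) t = Real.sqrt (2 * (m:ℝ) + 1) * (derivative (Qp m)).eval t := by
  have e : legL m = fun s => Real.sqrt (2 * (m:ℝ) + 1) * (Qp m).eval s := funext (legL_eq m)
  rw [e]
  exact (((Qp m).hasDerivAt t).const_mul _).deriv

theorem stmt19 (n k : ℕ) (hnk : n ≠ k) (x : ℝ) (hx : x ∈ Set.Icc (0 : ℝ) 1) :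
    ∫ t in (0 : ℝ)..x, legL n t * legL k t
      = (x - x ^ 2) * (legL n x * deriv (legL k) x - legL k x * deriv (legL n) x)
        / (((n : ℝ) + (k : ℝ) + 1) * ((n : ℝ) - (k : ℝ))) := by
  set lam : ℝ := ((n : ℝ) + (k : ℝ) + 1) * ((n : ℝ) - (k : ℝ)) with hlam
  have hlam0 : lam ≠ 0 := by
    apply mul_ne_zero
    · positivity
    · rw [sub_ne_zero]
      exact_mod_cast hnk
  set G : ℝ[X] := (X - X ^ 2) * (Qp n * derivative (Qp k) - Qp k * derivative (Qp n)) with hG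
  have hdG : derivative G = C lam * (Qp n * Qp k) := dG n k
  have hG0 : G.eval 0 = 0 := by simp [hG]
  have h1 : ∀ t : ℝ, legL n t * legL k t
      = (Real.sqrt (2*(n:ℝ)+1) * Real.sqrt (2*(k:ℝ)+1) * lam⁻¹) * (derivative G).eval t := by
    intro t
    rw [hdG, legL_eq, legL_eq]
    simp only [eval_mul, eval_C]
    field_simp
  calc ∫ t in (0:ℝ)..x, legL n t * legL k t
      = ∫ t in (0:ℝ)..x, (Real.sqrt (2*(n:ℝ)+1) * Real.sqrt (2*(k:ℝ)+1) * lam⁻¹)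
          * (derivative G).eval t := by
        simp_rw [h1]
    _ = (Real.sqrt (2*(n:ℝ)+1) * Real.sqrt (2*(k:ℝ)+1) * lam⁻¹) * (G.eval x - G.eval 0) := by
        rw [intervalIntegral.integral_const_mul, integ]
    _ = (x - x ^ 2) * (legL n x * deriv (legL k) x - legL k x * deriv (legL n) x) / lam := by
        rw [hG0, sub_zero, legL_eq, legL_eq, deriv_legL, deriv_legL, hG]
        simp only [eval_mul, eval_sub, eval_pow, eval_X]
        field_simp
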